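/- With X_σ = e^{σY}/M(σ) as above and central moments m̄_i(σ) := E[(X_σ − 1)^i], one has as σ → 0: m̄₂(σ) = σ² + μ₃σ³ + (7μ₄/12 − 5/4)σ⁴ + o(σ⁴), m̄₃(σ) = μ₃σ³ + (3/2)(μ₄ − 1)σ⁴ + o(σ⁴), and m̄₄(σ) = μ₄σ⁴ + o(σ⁴). -/

import Mathlib

open MeasureTheory Filter Asymptotics

-- pointwise exp Taylor bound
lemma exp_taylor_bound (x : ℝ) :
    |Real.exp x - (1 + x + x^2/2 + x^3/6 + x^4/24)| ≤ 3*|x|^5*(1+Real.exp x) := by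
  rcases le_or_gt |x| 1 with h | h
  · have hb := Real.exp_bound h (n := 5) (by norm_num)
    have hs : ∑ i ∈ Finset.range 5, x ^ i / (Nat.factorial i : ℝ)
        = 1 + x + x^2/2 + x^3/6 + x^4/24 := by
      simp [Finset.sum_range_succ, Nat.factorial]
    rw [hs] at hb
    norm_num [Nat.factorial] at hb
    have h1 : (0:ℝ) ≤ |x|^5 := by positivity
    nlinarith [Real.exp_pos x, hb]
  · have h0 : (1:ℝ) ≤ |x| := le_of_lt h
    have h5 : ∀ n : ℕ, n ≤ 5 → |x|^n ≤ |x|^5 := fun n hn => pow_le_pow_right₀ h0 hn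
    have e0 := h5 0 (by norm_num); have e1 := h5 1 (by norm_num)
    have e2 := h5 2 (by norm_num); have e3 := h5 3 (by norm_num)
    have e4 := h5 4 (by norm_num)
    have hx1 : -|x| ≤ x := neg_abs_le x
    have hx2 : x ≤ |x| := le_abs_self x
    have hsq : x^2 = |x|^2 := (sq_abs x).symm
    have h4 : x^4 = |x|^4 := by rw [← abs_pow]; exact (abs_of_nonneg (by positivity)).symm
    have h3a : x^3 ≤ |x|^3 := by rw [← abs_pow]; exact le_abs_self _
    have h3b : -(|x|^3) ≤ x^3 := by rw [← abs_pow]; exact neg_abs_le _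
    have hex := Real.exp_pos x
    rw [abs_le]
    constructor
    · nlinarith [mul_pos (pow_pos (abs_pos.mpr (by intro hx0; norm_num [hx0] at h : x ≠ 0)) 5) hex]
    · nlinarith [mul_pos (pow_pos (abs_pos.mpr (by intro hx0; norm_num [hx0] at h : x ≠ 0)) 5) hex]

-- exp(t*y) dominated by two-sided exponential
lemma exp_le_twoSided {t a y : ℝ} (h : |t| ≤ a) :
    Real.exp (t * y) ≤ Real.exp (a * y) + Real.exp (-a * y) := by
  have h1 : t * y ≤ a * |y| := by
    calc t * y ≤ |t * y| := le_abs_self _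
    _ = |t| * |y| := abs_mul t y
    _ ≤ a * |y| := by apply mul_le_mul_of_nonneg_right h (abs_nonneg y)
  rcases abs_cases y with ⟨hy, _⟩ | ⟨hy, _⟩
  · rw [hy] at h1
    exact le_add_of_le_of_nonneg (Real.exp_le_exp.mpr h1) (Real.exp_pos _).le
  · rw [hy] at h1
    have : a * -y = -a * y := by ring
    rw [this] at h1
    exact le_add_of_nonneg_of_le (Real.exp_pos _).le (Real.exp_le_exp.mpr h1)

-- |y|^n dominated by two-sided exponential
lemma abs_pow_le_twoSided {a : ℝ} (ha : 0 < a) (n : ℕ) (y : ℝ) :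
    |y| ^ n ≤ (Nat.factorial n : ℝ) * (a⁻¹)^n * (Real.exp (a * y) + Real.exp (-a * y)) := by
  have key : (a * |y|) ^ n / (Nat.factorial n : ℝ) ≤ Real.exp (a * |y|) := by
    calc (a * |y|) ^ n / (Nat.factorial n : ℝ)
        ≤ ∑ i ∈ Finset.range (n+1), (a * |y|) ^ i / (Nat.factorial i : ℝ) := by
          apply Finset.single_le_sum (f := fun i => (a * |y|) ^ i / (Nat.factorial i : ℝ))
            (fun i _ => by positivity) (Finset.self_mem_range_succ n)
    _ ≤ Real.exp (a * |y|) := Real.sum_le_exp_of_nonneg (by positivity) _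
  have h2 : Real.exp (a * |y|) ≤ Real.exp (a * y) + Real.exp (-a * y) := by
    rcases abs_cases y with ⟨hy, _⟩ | ⟨hy, _⟩
    · rw [hy]; exact le_add_of_le_of_nonneg le_rfl (Real.exp_pos _).le
    · rw [hy]
      have : a * -y = -a * y := by ring
      rw [this]; exact le_add_of_nonneg_of_le (Real.exp_pos _).le le_rfl
  have h3 : |y| ^ n = (a * |y|) ^ n * (a⁻¹)^n := by
    rw [mul_pow]
    field_simp
    rw [mul_assoc, ← mul_pow, mul_one_div_cancel ha.ne', one_pow, mul_one]
  rw [h3]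
  calc (a * |y|) ^ n * (a⁻¹)^n ≤ (Real.exp (a*|y|) * (Nat.factorial n : ℝ)) * (a⁻¹)^n := by
        apply mul_le_mul_of_nonneg_right _ (by positivity)
        rw [div_le_iff₀ (by positivity : (0:ℝ) < (Nat.factorial n : ℝ))] at key
        linarith
  _ ≤ ((Real.exp (a * y) + Real.exp (-a * y)) * (Nat.factorial n : ℝ)) * (a⁻¹)^n := by
        apply mul_le_mul_of_nonneg_right _ (by positivity)
        apply mul_le_mul_of_nonneg_right h2 (by positivity)
  _ = (Nat.factorial n : ℝ) * (a⁻¹)^n * (Real.exp (a * y) + Real.exp (-a * y)) := by ring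

noncomputable def Pfun (u₃ u₄ t : ℝ) : ℝ := 1 + t^2/2 + u₃*t^3/6 + u₄*t^4/24

noncomputable def U2fun (u₃ u₄ s : ℝ) : ℝ := 1 + s^2 + u₃*s^3 + (7*u₄/12 - 5/4)*s^4
noncomputable def U3fun (u₃ u₄ s : ℝ) : ℝ := 1 + 3*s^2 + 4*u₃*s^3 + (13*u₄/4 - 21/4)*s^4
noncomputable def U4fun (u₃ u₄ s : ℝ) : ℝ := 1 + 6*s^2 + 10*u₃*s^3 + (21*u₄/2 - 27/2)*s^4

noncomputable def Q2fun (u₃ u₄ s : ℝ) : ℝ :=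
  (-3/2)*u₃ + (1)*s + (-17/24)*s*u₄ + (-13/36)*s*u₃^2 + (-7/24)*s^2*u₃*u₄ + (5/16)*s^3 + (-1/12)*s^3*u₄ + (-29/576)*s^3*u₄^2 + (-7/36)*s^3*u₃^2 + (5/24)*s^4*u₃ + (-11/72)*s^4*u₃*u₄ + (-1/36)*s^4*u₃^3 + (5/96)*s^5*u₄ + (-5/192)*s^5*u₄^2 + (5/144)*s^5*u₃^2 + (-13/432)*s^5*u₃^2*u₄ + (5/288)*s^6*u₃*u₄ + (-17/1728)*s^6*u₃*u₄^2 + (5/2304)*s^7*u₄^2 + (-7/6912)*s^7*u₄^3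

noncomputable def Q3fun (u₃ u₄ s : ℝ) : ℝ :=
  (-8)*u₃ + (11/2)*s + (-43/8)*s*u₄ + (-25/12)*s*u₃^2 + (-2)*s^2*u₃ + (-13/6)*s^2*u₃*u₄ + (57/16)*s^3 + (-35/16)*s^3*u₄ + (-79/192)*s^3*u₄^2 + (-55/24)*s^3*u₃^2 + (7/4)*s^4*u₃ + (-109/48)*s^4*u₃*u₄ + (-73/216)*s^4*u₃^3 + (21/32)*s^5 + (5/32)*s^5*u₄ + (-163/384)*s^5*u₄^2 + (-3/16)*s^5*u₃^2 + (-127/288)*s^5*u₃^2*u₄ + (21/32)*s^6*u₃ + (-3/8)*s^6*u₃*u₄ + (-181/1152)*s^6*u₃*u₄^2 + (-13/72)*s^6*u₃^3 + (21/128)*s^7*u₄ + (-21/256)*s^7*u₄^2 + (-235/13824)*s^7*u₄^3 + (7/32)*s^7*u₃^2 + (-11/48)*s^7*u₃^2*u₄ + (-1/54)*s^7*u₃^4 + (7/64)*s^8*u₃*u₄ + (-31/384)*s^8*u₃*u₄^2 + (7/288)*s^8*u₃^3 + (-25/864)*s^8*u₃^3*u₄ + (7/512)*s^9*u₄^2 +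 (-5/576)*s^9*u₄^3 + (7/384)*s^9*u₃^2*u₄ + (-17/1152)*s^9*u₃^2*u₄^2 + (7/1536)*s^10*u₃*u₄^2 + (-43/13824)*s^10*u₃*u₄^3 + (7/18432)*s^11*u₄^3 + (-13/55296)*s^11*u₄^4

noncomputable def Q4fun (u₃ u₄ s : ℝ) : ℝ :=
  (-25)*u₃ + (35/2)*s + (-89/4)*s*u₄ + (-41/6)*s*u₃^2 + (-25/2)*s^2*u₃ + (-35/4)*s^2*u₃*u₄ + (275/16)*s^3 + (-121/8)*s^3*u₄ + (-169/96)*s^3*u₄^2 + (-67/6)*s^3*u₃^2 + (65/12)*s^4*u₃ + (-163/12)*s^4*u₃*u₄ + (-91/54)*s^4*u₃^3 + (51/8)*s^5 + (-127/48)*s^5*u₄ + (-259/96)*s^5*u₄^2 + (-91/24)*s^5*u₃^2 + (-187/72)*s^5*u₃^2*u₄ + (45/8)*s^6*u₃ + (-283/48)*s^6*u₃*u₄ + (-283/288)*s^6*u₃*u₄^2 + (-193/108)*s^6*u₃^3 + (27/32)*s^7 + (29/32)*s^7*u₄ + (-475/384)*s^7*u₄^2 + (-379/3456)*s^7*u₄^3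 + (7/6)*s^7*u₃^2 + (-385/144)*s^7*u₃^2*u₄ + (-241/1296)*s^7*u₃^4 + (9/8)*s^8*u₃ + (-1/12)*s^8*u₃*u₄ + (-577/576)*s^8*u₃*u₄^2 + (-2/9)*s^8*u₃^3 + (-433/1296)*s^8*u₃^3*u₄ + (9/32)*s^9*u₄ + (-3/32)*s^9*u₄^2 + (-769/6912)*s^9*u₄^3 + (9/16)*s^9*u₃^2 + (-1/2)*s^9*u₃^2*u₄ + (-625/3456)*s^9*u₃^2*u₄^2 + (-7/72)*s^9*u₃^4 + (9/32)*s^10*u₃*u₄ + (-5/24)*s^10*u₃*u₄^2 + (-817/20736)*s^10*u₃*u₄^3 + (1/8)*s^10*u₃^3 + (-37/216)*s^10*u₃^3*u₄ + (-5/648)*s^10*u₃^5 + (9/256)*s^11*u₄^2 + (-7/288)*s^11*u₄^3 + (-1009/331776)*s^11*u₄^4 + (3/32)*s^11*u₃^2*u₄ + (-53/576)*s^11*u₃^2*u₄^2 + (1/96)*s^11*u₃^4 + (-41/2592)*s^11*u₃^4*u₄ + (3/128)*s^12*u₃*u₄^2 + (-23/1152)*s^12*u₃*u₄^3 + (1/96)*s^12*u₃^3*u₄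 + (-19/1728)*s^12*u₃^3*u₄^2 + (1/512)*s^13*u₄^3 + (-85/55296)*s^13*u₄^4 + (1/256)*s^13*u₃^2*u₄^2 + (-73/20736)*s^13*u₃^2*u₄^3 + (1/1536)*s^14*u₃*u₄^3 + (-89/165888)*s^14*u₃*u₄^4 + (1/24576)*s^15*u₄^4 + (-7/221184)*s^15*u₄^5

lemma Q2_spec (u₃ u₄ s : ℝ) :
    Pfun u₃ u₄ (2*s) - U2fun u₃ u₄ s * (Pfun u₃ u₄ s)^2 = s^5 * Q2fun u₃ u₄ s := by
  simp only [Pfun, U2fun, Q2fun]; ring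

lemma Q3_spec (u₃ u₄ s : ℝ) :
    Pfun u₃ u₄ (3*s) - U3fun u₃ u₄ s * (Pfun u₃ u₄ s)^3 = s^5 * Q3fun u₃ u₄ s := by
  simp only [Pfun, U3fun, Q3fun]; ring

lemma Q4_spec (u₃ u₄ s : ℝ) :
    Pfun u₃ u₄ (4*s) - U4fun u₃ u₄ s * (Pfun u₃ u₄ s)^4 = s^5 * Q4fun u₃ u₄ s := by
  simp only [Pfun, U4fun, Q4fun]; ring

lemma h54 : (fun s : ℝ => s^5) =o[nhds (0:ℝ)] fun s => s^4 := by
  have h1 : (fun s : ℝ => s) =o[nhds (0:ℝ)] (fun _ => (1:ℝ)) :=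
    (isLittleO_one_iff ℝ).mpr tendsto_id
  have h2 := h1.mul_isBigO (isBigO_refl (fun s : ℝ => s^4) (nhds 0))
  refine h2.congr (fun s => by ring) (fun s => by ring)

lemma key_asymp (M P : ℝ → ℝ) (hMP : (fun t => M t - P t) =O[nhds (0:ℝ)] fun t => t^5)
    (hPcont : Continuous P) (hP0 : P 0 = 1)
    (c : ℝ) (n : ℕ) (U Q : ℝ → ℝ) (hUcont : Continuous U) (hQcont : Continuous Q)
    (hQ : ∀ s, P (c*s) - U s * (P s)^n = s^5 * Q s) :
    (fun σ => M (c*σ) / (M σ)^n - U σ) =o[nhds (0:ℝ)] fun σ => σ^4 := by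
  have h51 : (fun t : ℝ => t^5) =o[nhds (0:ℝ)] (fun _ => (1:ℝ)) :=
    (isLittleO_one_iff ℝ).mpr (by simpa using ((continuous_pow 5).tendsto (0:ℝ)))
  have hM0 : Tendsto M (nhds 0) (nhds 1) := by
    have h1 : Tendsto (fun t => M t - P t) (nhds (0:ℝ)) (nhds 0) :=
      (isLittleO_one_iff ℝ).mp (hMP.trans_isLittleO h51)
    have h2 : Tendsto P (nhds (0:ℝ)) (nhds 1) := hP0 ▸ hPcont.tendsto 0
    simpa using h1.add h2
  have hMne : ∀ᶠ σ : ℝ in nhds 0, M σ ≠ 0 := hM0.eventually_ne one_ne_zero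
  have htc : Tendsto (fun σ : ℝ => c*σ) (nhds 0) (nhds 0) := by
    simpa using (tendsto_id (α := ℝ) (x := nhds 0)).const_mul c
  have hMc : (fun σ : ℝ => M (c*σ) - P (c*σ)) =O[nhds (0:ℝ)] fun σ => σ^5 := by
    have h1 := hMP.comp_tendsto htc
    have h3 : ((fun t : ℝ => t^5) ∘ fun σ : ℝ => c*σ) = fun σ : ℝ => c^5 * σ^5 := by
      funext σ; simp [Function.comp]; ring
    rw [h3] at h1
    exact h1.trans (isBigO_const_mul_self (c^5) (fun σ : ℝ => σ^5) (nhds 0))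
  have hMO : M =O[nhds (0:ℝ)] (fun _ => (1:ℝ)) := hM0.isBigO_one ℝ
  have hPO : P =O[nhds (0:ℝ)] (fun _ => (1:ℝ)) := (hPcont.tendsto 0).isBigO_one ℝ
  have hpow : ∀ m : ℕ, (fun σ => (M σ)^m - (P σ)^m) =O[nhds (0:ℝ)] fun σ => σ^5 := by
    intro m
    induction m with
    | zero => simpa using (isBigO_zero (F := ℝ) (fun σ : ℝ => σ^5) (nhds 0))
    | succ m ih =>
      have h1 : (fun σ => (M σ)^(m+1) - (P σ)^(m+1))
          = fun σ => M σ * ((M σ)^m - (P σ)^m) + (M σ - P σ) * (P σ)^m := by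
        funext σ; ring
      rw [h1]
      have t1 := (hMO.mul ih).congr (g₂ := fun σ : ℝ => σ^5) (fun x => rfl) (fun x => one_mul _)
      have t2 := (hMP.mul (hPO.pow m)).congr (g₂ := fun σ : ℝ => σ^5) (fun x => rfl)
        (fun x => by simp)
      exact t1.add t2
  have hQO : Q =O[nhds (0:ℝ)] (fun _ => (1:ℝ)) := (hQcont.tendsto 0).isBigO_one ℝ
  have hUO : U =O[nhds (0:ℝ)] (fun _ => (1:ℝ)) := (hUcont.tendsto 0).isBigO_one ℝ
  -- numerator is o(σ^4)
  have t1 : (fun σ : ℝ => M (c*σ) - P (c*σ)) =o[nhds (0:ℝ)] fun σ => σ^4 :=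
    hMc.trans_isLittleO h54
  have t2 : (fun σ : ℝ => P (c*σ) - U σ * (P σ)^n) =o[nhds (0:ℝ)] fun σ => σ^4 := by
    have h1 : (fun σ : ℝ => P (c*σ) - U σ * (P σ)^n) = fun σ => σ^5 * Q σ := funext hQ
    rw [h1]
    exact (h54.mul_isBigO hQO).congr (fun x => rfl) (fun x => mul_one _)
  have t3 : (fun σ : ℝ => U σ * ((P σ)^n - (M σ)^n)) =o[nhds (0:ℝ)] fun σ => σ^4 := by
    have h1 : (fun σ : ℝ => (P σ)^n - (M σ)^n) =O[nhds (0:ℝ)] fun σ => σ^5 :=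
      (hpow n).neg_left.congr (fun x => by ring) (fun x => rfl)
    have h2 := (hUO.mul h1).congr (g₂ := fun σ : ℝ => σ^5) (fun x => rfl) (fun x => one_mul _)
    exact h2.trans_isLittleO h54
  have num : (fun σ : ℝ => M (c*σ) - U σ * (M σ)^n) =o[nhds (0:ℝ)] fun σ => σ^4 := by
    have h1 := (t1.add t2).add t3
    exact h1.congr (fun σ => by ring) (fun σ => rfl)
  -- divide by M σ ^ n
  have hinv : Tendsto (fun σ : ℝ => ((M σ)^n)⁻¹) (nhds 0) (nhds 1) := by
    have h1 : Tendsto (fun σ : ℝ => (M σ)^n) (nhds 0) (nhds 1) := by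
      simpa using hM0.pow n
    simpa using h1.inv₀ one_ne_zero
  have final := num.mul_isBigO (hinv.isBigO_one ℝ)
  refine final.congr' ?_ ?_
  · filter_upwards [hMne] with σ hσ
    have hn : (M σ)^n ≠ 0 := pow_ne_zero _ hσ
    field_simp
  · filter_upwards with σ
    simp

/-- With `X_σ = e^{σY}/M(σ)` and central moments
`m̄_i(σ) = E[(X_σ − 1)^i]`, as `σ → 0`:
`m̄₂(σ) = σ² + μ₃σ³ + (7μ₄/12 − 5/4)σ⁴ + o(σ⁴)`,
`m̄₃(σ) = μ₃σ³ + (3/2)(μ₄ − 1)σ⁴ + o(σ⁴)`, `m̄₄(σ) = μ₄σ⁴ + o(σ⁴)`. -/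
theorem stmt12 {Ω : Type*} [MeasurableSpace Ω] (μ : Measure Ω) [IsProbabilityMeasure μ]
    (Y : Ω → ℝ) (hY : Measurable Y)
    (hmean : ∫ ω, Y ω ∂μ = 0) (hvar : ∫ ω, (Y ω) ^ 2 ∂μ = 1)
    (μ₃ μ₄ : ℝ) (hμ₃ : μ₃ = ∫ ω, (Y ω) ^ 3 ∂μ) (hμ₄ : μ₄ = ∫ ω, (Y ω) ^ 4 ∂μ)
    (ε : ℝ) (hε : 0 < ε)
    (hMGF : ∀ σ : ℝ, |σ| < ε → Integrable (fun ω => Real.exp (σ * Y ω)) μ)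
    (M : ℝ → ℝ) (hM : ∀ σ, M σ = ∫ ω, Real.exp (σ * Y ω) ∂μ)
    (mbar : ℕ → ℝ → ℝ)
    (hmbar : ∀ (i : ℕ) (σ : ℝ),
      mbar i σ = ∫ ω, (Real.exp (σ * Y ω) / M σ - 1) ^ i ∂μ) :
    ((fun σ : ℝ => mbar 2 σ - (σ ^ 2 + μ₃ * σ ^ 3 + (7 * μ₄ / 12 - 5 / 4) * σ ^ 4))
        =o[nhds (0 : ℝ)] fun σ => σ ^ 4) ∧
    ((fun σ : ℝ => mbar 3 σ - (μ₃ * σ ^ 3 + (3 / 2) * (μ₄ - 1) * σ ^ 4))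
        =o[nhds (0 : ℝ)] fun σ => σ ^ 4) ∧
    ((fun σ : ℝ => mbar 4 σ - μ₄ * σ ^ 4)
        =o[nhds (0 : ℝ)] fun σ => σ ^ 4) := by
  -- basic constants
  set a : ℝ := ε/2 with ha_def
  set b : ℝ := 3*ε/4 with hb_def
  have hapos : 0 < a := by positivity
  have hbpos : 0 < b := by positivity
  have hbe : |b| < ε := by rw [abs_of_pos hbpos]; simp only [hb_def]; linarith
  have hbe' : |(-b)| < ε := by rwa [abs_neg]
  -- dominating function
  set G : Ω → ℝ := fun ω => Real.exp (b * Y ω) + Real.exp (-b * Y ω) with hG_def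
  have hGint : Integrable G μ := (hMGF b hbe).add (hMGF (-b) hbe')
  have hGnonneg : ∀ ω, 0 ≤ G ω := fun ω => by positivity
  -- integrability of all powers of Y
  have hYint : ∀ n : ℕ, Integrable (fun ω => (Y ω)^n) μ := by
    intro n
    refine Integrable.mono (hGint.const_mul ((Nat.factorial n : ℝ) * (b⁻¹)^n))
      ((hY.pow_const n).aestronglyMeasurable) (ae_of_all _ fun ω => ?_)
    rw [Real.norm_eq_abs, Real.norm_eq_abs, abs_pow]
    refine le_trans (abs_pow_le_twoSided hbpos n (Y ω)) (le_abs_self _)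
  -- positivity of M
  have hMpos : ∀ t : ℝ, |t| < ε → 0 < M t := by
    intro t ht
    rw [hM]
    exact ProbabilityTheory.mgf_pos (hMGF t ht)
  -- Taylor expansion of M at 0 of order 4, with O(t^5) error
  have hbound : ∀ t : ℝ, |t| ≤ ε/4 → |M t - Pfun μ₃ μ₄ t|
      ≤ (1440 * (a⁻¹)^5 * (∫ ω, G ω ∂μ)) * |t|^5 := by
    intro t ht
    have hte : |t| < ε := lt_of_le_of_lt ht (by linarith)
    -- pointwise bound
    have hpt : ∀ ω, ‖Real.exp (t * Y ω) -
        (1 + t*Y ω + (t*Y ω)^2/2 + (t*Y ω)^3/6 + (t*Y ω)^4/24)‖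
        ≤ (1440 * (a⁻¹)^5 * |t|^5) * G ω := by
      intro ω
      set y := Y ω
      have h0 := exp_taylor_bound (t * y)
      have hx5 : |t*y|^5 = |t|^5 * |y|^5 := by rw [abs_mul, mul_pow]
      -- |y|^5 * (1 + exp(t*y)) ≤ 480 * a⁻⁵ * G ω
      have h1 : |y|^5 ≤ 120 * (a⁻¹)^5 * (Real.exp (a*y) + Real.exp (-a*y)) := by
        have := abs_pow_le_twoSided hapos 5 y
        norm_num [Nat.factorial] at this ⊢
        linarith
      have h2 : Real.exp (a*y) ≤ G ω := by
        refine le_trans (exp_le_twoSided (y := y) (a := b) ?_) le_rfl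
        rw [abs_of_pos hapos]; simp only [ha_def, hb_def]; linarith
      have h3 : Real.exp (-a*y) ≤ G ω := by
        refine le_trans (exp_le_twoSided (y := y) (a := b) ?_) le_rfl
        rw [abs_neg, abs_of_pos hapos]; simp only [ha_def, hb_def]; linarith
      have h4 : Real.exp ((a+t)*y) ≤ G ω := by
        refine le_trans (exp_le_twoSided (y := y) (a := b) ?_) le_rfl
        have := abs_add_le a t
        rw [abs_of_pos hapos] at this
        refine le_trans this ?_
        simp only [ha_def, hb_def]; linarith
      have h5 : Real.exp ((-a+t)*y) ≤ G ω := by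
        refine le_trans (exp_le_twoSided (y := y) (a := b) ?_) le_rfl
        have := abs_add_le (-a) t
        rw [abs_neg, abs_of_pos hapos] at this
        refine le_trans this ?_
        simp only [ha_def, hb_def]; linarith
      have he1 : Real.exp (a*y) * Real.exp (t*y) = Real.exp ((a+t)*y) := by
        rw [← Real.exp_add]; ring_nf
      have he2 : Real.exp (-a*y) * Real.exp (t*y) = Real.exp ((-a+t)*y) := by
        rw [← Real.exp_add]; ring_nf
      have h6 : (0:ℝ) ≤ 1 + Real.exp (t*y) := by positivity
      have haux : |y|^5 * (1 + Real.exp (t*y)) ≤ 480 * (a⁻¹)^5 * G ω := by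
        calc |y|^5 * (1 + Real.exp (t*y))
            ≤ (120 * (a⁻¹)^5 * (Real.exp (a*y) + Real.exp (-a*y))) * (1 + Real.exp (t*y)) :=
              mul_le_mul_of_nonneg_right h1 h6
        _ = 120 * (a⁻¹)^5 * (Real.exp (a*y) + Real.exp (-a*y)
              + Real.exp (a*y) * Real.exp (t*y) + Real.exp (-a*y) * Real.exp (t*y)) := by ring
        _ = 120 * (a⁻¹)^5 * (Real.exp (a*y) + Real.exp (-a*y)
              + Real.exp ((a+t)*y) + Real.exp ((-a+t)*y)) := by rw [he1, he2]
        _ ≤ 120 * (a⁻¹)^5 * (4 * G ω) := by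
              refine mul_le_mul_of_nonneg_left (by linarith) (by positivity)
        _ = 480 * (a⁻¹)^5 * G ω := by ring
      rw [Real.norm_eq_abs]
      calc |Real.exp (t*y) - (1 + t*y + (t*y)^2/2 + (t*y)^3/6 + (t*y)^4/24)|
          ≤ 3*|t*y|^5*(1+Real.exp (t*y)) := h0
      _ = (3*|t|^5) * (|y|^5 * (1+Real.exp (t*y))) := by rw [hx5]; ring
      _ ≤ (3*|t|^5) * (480 * (a⁻¹)^5 * G ω) := by
            refine mul_le_mul_of_nonneg_left haux (by positivity)
      _ = (1440 * (a⁻¹)^5 * |t|^5) * G ω := by ring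
    -- integral of the Taylor polynomial
    have i1 : Integrable (fun ω => t * Y ω) μ := by
      have := (hYint 1).const_mul t; simpa using this
    have i2 : Integrable (fun ω => (t^2/2) * (Y ω)^2) μ := (hYint 2).const_mul _
    have i3 : Integrable (fun ω => (t^3/6) * (Y ω)^3) μ := (hYint 3).const_mul _
    have i4 : Integrable (fun ω => (t^4/24) * (Y ω)^4) μ := (hYint 4).const_mul _
    have hF : (fun ω => 1 + t*Y ω + (t*Y ω)^2/2 + (t*Y ω)^3/6 + (t*Y ω)^4/24)
        = fun ω => (1:ℝ) + (t * Y ω + ((t^2/2) * (Y ω)^2 + ((t^3/6) * (Y ω)^3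
            + (t^4/24) * (Y ω)^4))) := by
      funext ω; ring
    have hFint : Integrable (fun ω => 1 + t*Y ω + (t*Y ω)^2/2 + (t*Y ω)^3/6 + (t*Y ω)^4/24) μ := by
      rw [hF]
      exact (integrable_const 1).add (i1.add (i2.add (i3.add i4)))
    have i34 : Integrable (fun ω => (t^3/6) * (Y ω)^3 + (t^4/24) * (Y ω)^4) μ := i3.add i4
    have i234 : Integrable (fun ω => (t^2/2) * (Y ω)^2
        + ((t^3/6) * (Y ω)^3 + (t^4/24) * (Y ω)^4)) μ := i2.add i34
    have i1234 : Integrable (fun ω => t * Y ω + ((t^2/2) * (Y ω)^2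
        + ((t^3/6) * (Y ω)^3 + (t^4/24) * (Y ω)^4))) μ := i1.add i234
    have hPint : ∫ ω, (1 + t*Y ω + (t*Y ω)^2/2 + (t*Y ω)^3/6 + (t*Y ω)^4/24) ∂μ
        = Pfun μ₃ μ₄ t := by
      rw [hF, integral_add (integrable_const 1) i1234, integral_add i1 i234,
        integral_add i2 i34, integral_add i3 i4,
        integral_const_mul, integral_const_mul, integral_const_mul, integral_const_mul]
      rw [hmean, hvar, ← hμ₃, ← hμ₄]
      simp [Pfun]
      ring
    -- assemble
    have hsub : M t - Pfun μ₃ μ₄ t = ∫ ω, (Real.exp (t * Y ω)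
        - (1 + t*Y ω + (t*Y ω)^2/2 + (t*Y ω)^3/6 + (t*Y ω)^4/24)) ∂μ := by
      rw [integral_sub (hMGF t hte) hFint, ← hM, hPint]
    rw [hsub, ← Real.norm_eq_abs]
    calc ‖∫ ω, (Real.exp (t * Y ω)
        - (1 + t*Y ω + (t*Y ω)^2/2 + (t*Y ω)^3/6 + (t*Y ω)^4/24)) ∂μ‖
        ≤ ∫ ω, (1440 * (a⁻¹)^5 * |t|^5) * G ω ∂μ :=
          norm_integral_le_of_norm_le (hGint.const_mul _) (ae_of_all _ hpt)
    _ = (1440 * (a⁻¹)^5 * (∫ ω, G ω ∂μ)) * |t|^5 := by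
          rw [integral_const_mul]; ring
  -- M - P = O(t^5)
  have hMP : (fun t => M t - Pfun μ₃ μ₄ t) =O[nhds (0:ℝ)] fun t => t^5 := by
    rw [isBigO_iff]
    refine ⟨1440 * (a⁻¹)^5 * (∫ ω, G ω ∂μ), ?_⟩
    have hev : ∀ᶠ t : ℝ in nhds 0, |t| ≤ ε/4 := by
      have h := Metric.ball_mem_nhds (0:ℝ) (show (0:ℝ) < ε/4 by positivity)
      filter_upwards [h] with t ht
      rw [Metric.mem_ball, Real.dist_eq, sub_zero] at ht
      exact ht.le
    filter_upwards [hev] with t ht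
    rw [Real.norm_eq_abs, Real.norm_eq_abs, abs_pow]
    exact hbound t ht
  have hPcont : Continuous (Pfun μ₃ μ₄) := by unfold Pfun; fun_prop
  have hP0 : Pfun μ₃ μ₄ 0 = 1 := by simp [Pfun]
  -- the three key asymptotics
  have key2 : (fun σ => M (2*σ) / (M σ)^2 - U2fun μ₃ μ₄ σ) =o[nhds (0:ℝ)] fun σ => σ^4 :=
    key_asymp M (Pfun μ₃ μ₄) hMP hPcont hP0 2 2 (U2fun μ₃ μ₄) (Q2fun μ₃ μ₄)
      (by unfold U2fun; fun_prop) (by unfold Q2fun; fun_prop) (Q2_spec μ₃ μ₄)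
  have key3 : (fun σ => M (3*σ) / (M σ)^3 - U3fun μ₃ μ₄ σ) =o[nhds (0:ℝ)] fun σ => σ^4 :=
    key_asymp M (Pfun μ₃ μ₄) hMP hPcont hP0 3 3 (U3fun μ₃ μ₄) (Q3fun μ₃ μ₄)
      (by unfold U3fun; fun_prop) (by unfold Q3fun; fun_prop) (Q3_spec μ₃ μ₄)
  have key4 : (fun σ => M (4*σ) / (M σ)^4 - U4fun μ₃ μ₄ σ) =o[nhds (0:ℝ)] fun σ => σ^4 :=
    key_asymp M (Pfun μ₃ μ₄) hMP hPcont hP0 4 4 (U4fun μ₃ μ₄) (Q4fun μ₃ μ₄)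
      (by unfold U4fun; fun_prop) (by unfold Q4fun; fun_prop) (Q4_spec μ₃ μ₄)
  -- formulas for mbar in terms of M, valid for small σ
  have hform : ∀ σ : ℝ, |σ| < ε/4 →
      mbar 2 σ = M (2*σ)/(M σ)^2 - 1 ∧
      mbar 3 σ = M (3*σ)/(M σ)^3 - 3*(M (2*σ)/(M σ)^2) + 2 ∧
      mbar 4 σ = M (4*σ)/(M σ)^4 - 4*(M (3*σ)/(M σ)^3) + 6*(M (2*σ)/(M σ)^2) - 3 := by
    intro σ hσ
    have h1 : |σ| < ε := lt_trans hσ (by linarith)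
    have h2 : |2*σ| < ε := by rw [abs_mul]; rw [abs_two]; linarith
    have h3 : |3*σ| < ε := by
      rw [abs_mul, abs_of_pos (by norm_num : (0:ℝ) < 3)]; linarith
    have h4 : |4*σ| < ε := by
      rw [abs_mul, abs_of_pos (by norm_num : (0:ℝ) < 4)]; linarith
    have hc : 0 < M σ := hMpos σ h1
    have hcne : M σ ≠ 0 := hc.ne'
    have hI1 : Integrable (fun ω => Real.exp (σ * Y ω)) μ := hMGF σ h1
    have hI2 : Integrable (fun ω => Real.exp (2*σ * Y ω)) μ := by
      have := hMGF (2*σ) h2; simpa [mul_assoc] using this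
    have hI3 : Integrable (fun ω => Real.exp (3*σ * Y ω)) μ := by
      have := hMGF (3*σ) h3; simpa [mul_assoc] using this
    have hI4 : Integrable (fun ω => Real.exp (4*σ * Y ω)) μ := by
      have := hMGF (4*σ) h4; simpa [mul_assoc] using this
    have hE2 : ∀ ω, (Real.exp (σ * Y ω))^2 = Real.exp (2*σ * Y ω) := by
      intro ω
      rw [show (2:ℝ)*σ*Y ω = ((2:ℕ):ℝ)*(σ*Y ω) by push_cast; ring, Real.exp_nat_mul]
    have hE3 : ∀ ω, (Real.exp (σ * Y ω))^3 = Real.exp (3*σ * Y ω) := by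
      intro ω
      rw [show (3:ℝ)*σ*Y ω = ((3:ℕ):ℝ)*(σ*Y ω) by push_cast; ring, Real.exp_nat_mul]
    have hE4 : ∀ ω, (Real.exp (σ * Y ω))^4 = Real.exp (4*σ * Y ω) := by
      intro ω
      rw [show (4:ℝ)*σ*Y ω = ((4:ℕ):ℝ)*(σ*Y ω) by push_cast; ring, Real.exp_nat_mul]
    have hint2 : ∫ ω, Real.exp (2*σ * Y ω) ∂μ = M (2*σ) := (hM (2*σ)).symm
    have hint3 : ∫ ω, Real.exp (3*σ * Y ω) ∂μ = M (3*σ) := (hM (3*σ)).symm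
    have hint4 : ∫ ω, Real.exp (4*σ * Y ω) ∂μ = M (4*σ) := (hM (4*σ)).symm
    refine ⟨?_, ?_, ?_⟩
    · rw [hmbar]
      have hfun : (fun ω => (Real.exp (σ * Y ω) / M σ - 1)^2)
          = fun ω => ((M σ)^2)⁻¹ * Real.exp (2*σ * Y ω)
              + ((-2*(M σ)⁻¹) * Real.exp (σ * Y ω) + 1) := by
        funext ω
        rw [← hE2 ω]
        field_simp
        ring
      have j1 : Integrable (fun ω => (-2*(M σ)⁻¹) * Real.exp (σ * Y ω) + 1) μ :=
        (hI1.const_mul _).add (integrable_const 1)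
      rw [hfun, integral_add (hI2.const_mul _) j1,
        integral_add (hI1.const_mul _) (integrable_const 1),
        integral_const_mul, integral_const_mul, hint2, ← hM]
      simp only [integral_const, probReal_univ, measure_univ, ENNReal.toReal_one, smul_eq_mul, one_mul]
      field_simp
      ring
    · rw [hmbar]
      have hfun : (fun ω => (Real.exp (σ * Y ω) / M σ - 1)^3)
          = fun ω => ((M σ)^3)⁻¹ * Real.exp (3*σ * Y ω)
              + ((-3*((M σ)^2)⁻¹) * Real.exp (2*σ * Y ω)
              + ((3*(M σ)⁻¹) * Real.exp (σ * Y ω) + (-1))) := by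
        funext ω
        rw [← hE2 ω, ← hE3 ω]
        field_simp
        ring
      have j1 : Integrable (fun ω => (3*(M σ)⁻¹) * Real.exp (σ * Y ω) + (-1)) μ :=
        (hI1.const_mul _).add (integrable_const (-1))
      have j2 : Integrable (fun ω => (-3*((M σ)^2)⁻¹) * Real.exp (2*σ * Y ω)
          + ((3*(M σ)⁻¹) * Real.exp (σ * Y ω) + (-1))) μ := (hI2.const_mul _).add j1
      rw [hfun, integral_add (hI3.const_mul _) j2,
        integral_add (hI2.const_mul _) j1,
        integral_add (hI1.const_mul _) (integrable_const (-1)),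
        integral_const_mul, integral_const_mul, integral_const_mul, hint2, hint3, ← hM]
      simp only [integral_const, probReal_univ, measure_univ, ENNReal.toReal_one, smul_eq_mul, one_mul]
      field_simp
      ring
    · rw [hmbar]
      have hfun : (fun ω => (Real.exp (σ * Y ω) / M σ - 1)^4)
          = fun ω => ((M σ)^4)⁻¹ * Real.exp (4*σ * Y ω)
              + ((-4*((M σ)^3)⁻¹) * Real.exp (3*σ * Y ω)
              + ((6*((M σ)^2)⁻¹) * Real.exp (2*σ * Y ω)
              + ((-4*(M σ)⁻¹) * Real.exp (σ * Y ω) + 1))) := by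
        funext ω
        rw [← hE2 ω, ← hE3 ω, ← hE4 ω]
        field_simp
        ring
      have j1 : Integrable (fun ω => (-4*(M σ)⁻¹) * Real.exp (σ * Y ω) + 1) μ :=
        (hI1.const_mul _).add (integrable_const 1)
      have j2 : Integrable (fun ω => (6*((M σ)^2)⁻¹) * Real.exp (2*σ * Y ω)
          + ((-4*(M σ)⁻¹) * Real.exp (σ * Y ω) + 1)) μ := (hI2.const_mul _).add j1
      have j3 : Integrable (fun ω => (-4*((M σ)^3)⁻¹) * Real.exp (3*σ * Y ω)
          + ((6*((M σ)^2)⁻¹) * Real.exp (2*σ * Y ω)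
          + ((-4*(M σ)⁻¹) * Real.exp (σ * Y ω) + 1))) μ := (hI3.const_mul _).add j2
      rw [hfun, integral_add (hI4.const_mul _) j3,
        integral_add (hI3.const_mul _) j2,
        integral_add (hI2.const_mul _) j1,
        integral_add (hI1.const_mul _) (integrable_const 1),
        integral_const_mul, integral_const_mul, integral_const_mul, integral_const_mul,
        hint2, hint3, hint4, ← hM]
      simp only [integral_const, probReal_univ, measure_univ, ENNReal.toReal_one, smul_eq_mul, one_mul]
      field_simp
      ring
  have hev : ∀ᶠ σ : ℝ in nhds 0, |σ| < ε/4 := by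
    have h := Metric.ball_mem_nhds (0:ℝ) (show (0:ℝ) < ε/4 by positivity)
    filter_upwards [h] with t ht
    rwa [Metric.mem_ball, Real.dist_eq, sub_zero] at ht
  refine ⟨?_, ?_, ?_⟩
  · refine key2.congr' ?_ (Eventually.of_forall fun σ => rfl)
    filter_upwards [hev] with σ hσ
    rw [(hform σ hσ).1]
    simp only [U2fun]
    ring
  · refine (key3.sub (key2.const_mul_left 3)).congr' ?_ (Eventually.of_forall fun σ => rfl)
    filter_upwards [hev] with σ hσ
    rw [(hform σ hσ).2.1]
    simp only [U2fun, U3fun]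
    ring
  · refine ((key4.sub (key3.const_mul_left 4)).add (key2.const_mul_left 6)).congr' ?_
      (Eventually.of_forall fun σ => rfl)
    filter_upwards [hev] with σ hσ
    rw [(hform σ hσ).2.2]
    simp only [U2fun, U3fun, U4fun]
    ring
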